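/- Let Σ be an n×n positive semidefinite matrix and L an m×n matrix with LΣL† invertible, and G = ΣL†(LΣL†)^{-1}. Then GLΣ(GL)† = GLΣ, i.e. GLΣ is symmetric and GL acts as a projection on Σ in the sense that (GL)Σ(GL)† = (GL)Σ. -/

import Mathlib

open Matrix

/-- With Σ PSD, L with LΣL† invertible, and G = ΣL†(LΣL†)⁻¹, we have GLΣ(GL)† = GLΣ,
i.e. GLΣ is symmetric and GL acts as a projection on Σ. -/
theorem stmt_2 {n m : ℕ} (S : Matrix (Fin n) (Fin n) ℝ) (L : Matrix (Fin m) (Fin n) ℝ)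
    (hS : S.PosSemidef) (hinv : IsUnit (L * S * Lᵀ)) :
    ((S * Lᵀ * (L * S * Lᵀ)⁻¹) * L) * S * ((S * Lᵀ * (L * S * Lᵀ)⁻¹) * L)ᵀ
      = ((S * Lᵀ * (L * S * Lᵀ)⁻¹) * L) * S := by
  have hSs : Sᵀ = S := by
    have := hS.isHermitian.eq
    simpa [Matrix.conjTranspose, Matrix.transpose, Matrix.map, starRingEnd_apply, star_trivial] using this
  have hAs : (L * S * Lᵀ)ᵀ = L * S * Lᵀ := by
    simp [Matrix.transpose_mul, hSs, Matrix.mul_assoc]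
  have hIs : ((L * (S * Lᵀ))⁻¹)ᵀ = (L * (S * Lᵀ))⁻¹ := by
    rw [← Matrix.mul_assoc, Matrix.transpose_nonsing_inv, hAs]
  have hdet : IsUnit (L * (S * Lᵀ)).det := by
    rw [← Matrix.mul_assoc]; exact (Matrix.isUnit_iff_isUnit_det _).mp hinv
  have h2 : ∀ X : Matrix (Fin m) (Fin n) ℝ,
      L * (S * (Lᵀ * ((L * (S * Lᵀ))⁻¹ * X))) = X := by
    intro X
    rw [← Matrix.mul_assoc, ← Matrix.mul_assoc, ← Matrix.mul_assoc,
      Matrix.mul_assoc L S Lᵀ, Matrix.mul_nonsing_inv _ hdet, Matrix.one_mul]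
  have ht : ((S * Lᵀ * (L * S * Lᵀ)⁻¹) * L)ᵀ = Lᵀ * ((L * (S * Lᵀ))⁻¹ * (L * S)) := by
    simp [Matrix.transpose_mul, hSs, Matrix.mul_assoc, hIs]
  rw [ht]
  simp only [Matrix.mul_assoc]
  rw [h2]
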